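/- Let X be a real Banach space with a semi-normalized Markushevich basis (e_i, e*_i) which is a Schauder basis with basis constant K, let t ∈ (0,1], and let n = (n_k) be a strictly increasing sequence of positive integers having l-bounded gaps for some integer l ≥ 2, i.e. n_{k+1} ≤ l·n_k for all k. Suppose the basis is C-n-t-quasi-greedy. Then the basis is quasi-greedy: for every x ∈ X and every greedy set A for x (of any finite cardinality), ‖P_A(x)‖ ≤ max{ n_1·α_1·α_2 , 2·C·K·(l − 1 + K) }·‖x‖. -/

import Mathlib

open Finset


lemma coeff_sum {X : Type*} [NormedAddCommGroup X] [NormedSpace ℝ X]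
    (e : ℕ → X) (f : ℕ → X →L[ℝ] ℝ)
    (hbio : ∀ k i, f k (e i) = if k = i then 1 else 0)
    (g : ℕ → ℝ) (s : Finset ℕ) (j : ℕ) :
    f j (∑ i ∈ s, g i • e i) = if j ∈ s then g j else 0 := by
  rw [map_sum]
  have h : ∀ i ∈ s, f j (g i • e i) = if j = i then g i else 0 := by
    intro i _
    rw [map_smul, hbio j i, smul_eq_mul]
    split_ifs <;> ring
  rw [Finset.sum_congr rfl h, Finset.sum_ite_eq s j g]

lemma exists_top_subset {β : Type*} [LinearOrder β] (g : ℕ → β) :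
    ∀ (d : ℕ) (s : Finset ℕ), d ≤ s.card →
    ∃ u, u ⊆ s ∧ u.card = d ∧ ∀ i ∈ u, ∀ j ∈ s, j ∉ u → g j ≤ g i := by
  intro d
  induction d with
  | zero =>
    intro s _
    exact ⟨∅, empty_subset s, card_empty, by simp⟩
  | succ d ih =>
    intro s hd
    have hs : s.Nonempty := card_pos.mp (lt_of_lt_of_le (Nat.succ_pos d) hd)
    obtain ⟨i₀, hi₀s, hi₀max⟩ := s.exists_max_image g hs
    have hcard : d ≤ (s.erase i₀).card := by
      rw [card_erase_of_mem hi₀s]; omega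
    obtain ⟨u, hus, hucard, humax⟩ := ih (s.erase i₀) hcard
    refine ⟨insert i₀ u, ?_, ?_, ?_⟩
    · intro a ha
      rcases mem_insert.mp ha with rfl | ha
      · exact hi₀s
      · exact mem_of_mem_erase (hus ha)
    · rw [card_insert_of_notMem (fun h => (mem_erase.mp (hus h)).1 rfl), hucard]
    · intro i hi j hjs hju
      rcases mem_insert.mp hi with rfl | hiu
      · exact hi₀max j hjs
      · refine humax i hiu j (mem_erase.mpr ⟨?_, hjs⟩) (fun h => hju (mem_insert_of_mem h))
        intro h
        exact hju (h ▸ mem_insert_self i₀ u)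

lemma exists_filter_card_eq (A : Finset ℕ) (N : ℕ) (hN : ∀ a ∈ A, a < N)
    (v : ℕ) (hv : v ≤ A.card) :
    ∃ q, (A.filter (fun a => q ≤ a)).card = v := by
  classical
  set cnt := fun q => (A.filter (fun a => q ≤ a)).card with hcnt
  have hstep : ∀ q, cnt q ≤ cnt (q+1) + 1 := by
    intro q
    have hsub : A.filter (fun a => q ≤ a) ⊆ insert q (A.filter (fun a => q + 1 ≤ a)) := by
      intro a ha
      obtain ⟨h1, h2⟩ := mem_filter.mp ha
      rcases Nat.eq_or_lt_of_le h2 with h | h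
      · exact mem_insert.mpr (Or.inl h.symm)
      · exact mem_insert.mpr (Or.inr (mem_filter.mpr ⟨h1, h⟩))
    calc cnt q ≤ (insert q (A.filter (fun a => q + 1 ≤ a))).card := card_le_card hsub
    _ ≤ cnt (q+1) + 1 := card_insert_le _ _
  have hN0 : cnt N = 0 := by
    rw [hcnt]
    simp only [Finset.card_eq_zero]
    rw [Finset.filter_eq_empty_iff]
    intro a ha
    have := hN a ha
    omega
  have h0 : v ≤ cnt 0 := by
    have : A.filter (fun a => 0 ≤ a) = A := Finset.filter_true_of_mem (fun a _ => Nat.zero_le a)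
    rw [hcnt]
    simpa [this] using hv
  set Q := Nat.findGreatest (fun q => v ≤ cnt q) N with hQ
  have hspec : v ≤ cnt Q :=
    Nat.findGreatest_spec (P := fun q => v ≤ cnt q) (Nat.zero_le N) h0
  have hQle : Q ≤ N := Nat.findGreatest_le N
  rcases eq_or_lt_of_le hQle with hEq | hlt
  · refine ⟨N, ?_⟩
    rw [hEq] at hspec
    rw [hN0] at hspec
    show cnt N = v
    omega
  · refine ⟨Q, ?_⟩
    have h1 : ¬ (v ≤ cnt (Q+1)) :=
      Nat.findGreatest_is_greatest (P := fun q => v ≤ cnt q) (Nat.lt_succ_self Q) (by omega)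
    have h2 := hstep Q
    show cnt Q = v
    omega

/-- Coordinate projection `P_A x = ∑_{i ∈ A} e*_i(x) • e_i`. -/
noncomputable def proj {X : Type*} [NormedAddCommGroup X] [NormedSpace ℝ X]
    (e : ℕ → X) (f : ℕ → X →L[ℝ] ℝ) (A : Finset ℕ) (x : X) : X :=
  ∑ i ∈ A, f i x • e i

/-- `A` is a `t`-greedy set for `x`:
`min_{i ∈ A} |e*_i(x)| ≥ t · sup_{j ∉ A} |e*_j(x)|`. -/
def IsGreedySet {X : Type*} [NormedAddCommGroup X] [NormedSpace ℝ X]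
    (f : ℕ → X →L[ℝ] ℝ) (t : ℝ) (x : X) (A : Finset ℕ) : Prop :=
  ∀ i ∈ A, ∀ j ∉ A, t * |f j x| ≤ |f i x|

/-- If a Schauder basis with basis constant `K` is `C`-`n`-`t`-quasi-greedy and
the sequence `n` has `l`-bounded gaps (`n_{k+1} ≤ l·n_k`), then the basis is
quasi-greedy with constant `max{n₁·α₁·α₂, 2CK(l − 1 + K)}`. -/
theorem stmt_6 {X : Type*} [NormedAddCommGroup X] [NormedSpace ℝ X] [CompleteSpace X]
    (e : ℕ → X) (f : ℕ → X →L[ℝ] ℝ)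
    (hdense : Dense (Submodule.span ℝ (Set.range e) : Set X))
    (hbio : ∀ k i, f k (e i) = if k = i then 1 else 0)
    (htotal : ∀ x : X, (∀ i, f i x = 0) → x = 0)
    (hb1 : BddAbove (Set.range fun i => ‖e i‖))
    (hb2 : BddAbove (Set.range fun i => ‖f i‖))
    (K : ℝ)
    (hSchauder : ∀ (x : X) (m : ℕ), ‖∑ i ∈ Finset.range m, f i x • e i‖ ≤ K * ‖x‖)
    (t : ℝ) (ht0 : 0 < t) (ht1 : t ≤ 1)
    (n : ℕ → ℕ) (hn : StrictMono n) (hnpos : ∀ k, 0 < n k)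
    (l : ℕ) (hl : 2 ≤ l) (hgaps : ∀ k, n (k + 1) ≤ l * n k)
    (C : ℝ)
    (hqg : ∀ (x : X) (A : Finset ℕ), IsGreedySet f t x A → (∃ k, A.card = n k) →
      ‖proj e f A x‖ ≤ C * ‖x‖) :
    ∀ (x : X) (A : Finset ℕ), IsGreedySet f 1 x A →
      ‖proj e f A x‖ ≤
        max ((n 0 : ℝ) * (⨆ i, ‖e i‖) * (⨆ i, ‖f i‖))
          (2 * C * K * ((l : ℝ) - 1 + K)) * ‖x‖ := by
  classical
  -- basic constants
  have he0 : e 0 ≠ 0 := by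
    intro h
    have h2 := hbio 0 0
    rw [h, map_zero] at h2
    simp at h2
  have he0pos : 0 < ‖e 0‖ := norm_pos_iff.mpr he0
  have hK0 : 0 ≤ K := by
    have h := hSchauder (e 0) 0
    simp only [Finset.range_zero, Finset.sum_empty, norm_zero] at h
    nlinarith
  have hC0 : 0 ≤ C := by
    have hg : IsGreedySet f t (e 0) (range (n 0)) := by
      intro i hi j hj
      have hj0 : j ≠ 0 := by
        intro h
        subst h
        exact hj (mem_range.mpr (hnpos 0))
      rw [hbio j 0, if_neg hj0]
      simp only [abs_zero, mul_zero]
      exact abs_nonneg _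
    have h := hqg (e 0) (range (n 0)) hg ⟨0, card_range _⟩
    nlinarith [norm_nonneg (proj e f (range (n 0)) (e 0))]
  intro x A hA
  by_cases hsmall : A.card ≤ n 0
  · -- small case: coordinatewise
    have hα₁0 : (0:ℝ) ≤ ⨆ i, ‖e i‖ := le_trans (norm_nonneg (e 0)) (le_ciSup hb1 0)
    have hα₂0 : (0:ℝ) ≤ ⨆ i, ‖f i‖ := le_trans (norm_nonneg (f 0)) (le_ciSup hb2 0)
    have hterm : ∀ i ∈ A, ‖f i x • e i‖ ≤ ((⨆ i, ‖f i‖) * ‖x‖) * (⨆ i, ‖e i‖) := by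
      intro i _
      rw [norm_smul, Real.norm_eq_abs]
      refine mul_le_mul ?_ (le_ciSup hb1 i) (norm_nonneg _)
        (mul_nonneg hα₂0 (norm_nonneg x))
      calc |f i x| = ‖f i x‖ := (Real.norm_eq_abs _).symm
      _ ≤ ‖f i‖ * ‖x‖ := (f i).le_opNorm x
      _ ≤ (⨆ i, ‖f i‖) * ‖x‖ := mul_le_mul_of_nonneg_right (le_ciSup hb2 i) (norm_nonneg x)
    calc ‖proj e f A x‖ ≤ ∑ i ∈ A, ‖f i x • e i‖ := norm_sum_le _ _
    _ ≤ A.card • (((⨆ i, ‖f i‖) * ‖x‖) * (⨆ i, ‖e i‖)) :=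
        Finset.sum_le_card_nsmul _ _ _ hterm
    _ = (A.card : ℝ) * (((⨆ i, ‖f i‖) * ‖x‖) * (⨆ i, ‖e i‖)) := nsmul_eq_mul _ _
    _ ≤ (n 0 : ℝ) * (((⨆ i, ‖f i‖) * ‖x‖) * (⨆ i, ‖e i‖)) := by
        refine mul_le_mul_of_nonneg_right (Nat.cast_le.mpr hsmall) ?_
        exact mul_nonneg (mul_nonneg hα₂0 (norm_nonneg x)) hα₁0
    _ = ((n 0 : ℝ) * (⨆ i, ‖e i‖) * (⨆ i, ‖f i‖)) * ‖x‖ := by ring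
    _ ≤ max ((n 0 : ℝ) * (⨆ i, ‖e i‖) * (⨆ i, ‖f i‖))
          (2 * C * K * ((l : ℝ) - 1 + K)) * ‖x‖ :=
        mul_le_mul_of_nonneg_right (le_max_left _ _) (norm_nonneg x)
  · -- main case
    push_neg at hsmall
    set m := A.card with hm
    have hni : ∀ i, i ≤ n i := by
      intro i
      induction i with
      | zero => exact Nat.zero_le _
      | succ i ih =>
        exact Nat.succ_le_of_lt (lt_of_le_of_lt ih (hn (Nat.lt_succ_self i)))
    set k := Nat.findGreatest (fun j => n j ≤ m) m with hk
    have hk1 : n k ≤ m :=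
      Nat.findGreatest_spec (P := fun j => n j ≤ m) (Nat.zero_le m) (le_of_lt hsmall)
    have hk2 : m < n (k + 1) := by
      by_contra h
      push_neg at h
      have hkm : k + 1 ≤ m := le_trans (hni (k+1)) h
      have hlt : k < k + 1 := Nat.lt_succ_self k
      have := Nat.findGreatest_is_greatest (P := fun j => n j ≤ m) (n := m) hlt hkm
      exact this h
    set N := A.sup id + 1 with hN
    have hNA : ∀ a ∈ A, a < N := by
      intro a ha
      have : a ≤ A.sup id := Finset.le_sup (f := id) ha
      omega
    have hnk : 0 < n k := hnpos k
    set c := m / n k with hc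
    set r := m % n k with hr
    have hcr : c * n k + r = m := by
      have h := Nat.div_add_mod m (n k)
      rw [hc, hr, mul_comm]
      exact h
    have hrnk : r < n k := by
      rw [hr]
      exact Nat.mod_lt _ hnk
    have hc1 : 1 ≤ c := by
      rw [hc]
      exact (Nat.one_le_div_iff hnk).mpr hk1
    have hcl : c < l := by
      rw [hc]
      rw [Nat.div_lt_iff_lt_mul hnk]
      exact lt_of_lt_of_le hk2 (hgaps k)
    -- choose chunk boundaries
    have hqex : ∀ i : ℕ, i ≤ c → ∃ qq : ℕ, (A.filter (fun a => qq ≤ a)).card = i * n k := by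
      intro i hi
      refine exists_filter_card_eq A N hNA (i * n k) ?_
      calc i * n k ≤ c * n k := Nat.mul_le_mul_right _ hi
      _ ≤ m := by omega
    set qf : ℕ → ℕ := fun i => if h : i ≤ c then (hqex i h).choose else 0 with hqfdef
    have hqf : ∀ i, i ≤ c → (A.filter (fun a => qf i ≤ a)).card = i * n k := by
      intro i hi
      have : qf i = (hqex i hi).choose := by
        rw [hqfdef]
        simp only [dif_pos hi]
      rw [this]
      exact (hqex i hi).choose_spec
    set D : ℕ → Finset ℕ := fun i => A.filter (fun a => qf i ≤ a) with hDdef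
    have hDcard : ∀ i, i ≤ c → (D i).card = i * n k := hqf
    have hqlt : ∀ i, i + 1 ≤ c → qf (i + 1) < qf i := by
      intro i h
      by_contra hle
      push_neg at hle
      have hsub : D (i+1) ⊆ D i := by
        intro a ha
        obtain ⟨h1, h2⟩ := mem_filter.mp ha
        exact mem_filter.mpr ⟨h1, le_trans hle h2⟩
      have hcard := card_le_card hsub
      rw [hDcard (i+1) h, hDcard i (by omega)] at hcard
      have hexp : (i+1) * n k = i * n k + n k := by ring
      omega
    -- telescoping chunk bound
    have hDbound : ∀ i, i ≤ c → ‖proj e f (D i) x‖ ≤ (i : ℝ) * (2 * C * K * ‖x‖) := by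
      intro i
      induction i with
      | zero =>
        intro _
        have h0 : D 0 = ∅ := by
          have h1 := hDcard 0 (Nat.zero_le c)
          rw [Nat.zero_mul] at h1
          exact card_eq_zero.mp h1
        simp [proj, h0]
      | succ i ih =>
        intro hic
        have hi : i ≤ c := by omega
        have hlt : qf (i+1) < qf i := hqlt i hic
        have hsub : D i ⊆ D (i+1) := by
          intro a ha
          obtain ⟨h1, h2⟩ := mem_filter.mp ha
          exact mem_filter.mpr ⟨h1, le_of_lt (lt_of_lt_of_le hlt h2)⟩
        set E := D (i+1) \ D i with hE
        have hEcard : E.card = n k := by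
          rw [hE, card_sdiff_of_subset hsub, hDcard (i+1) hic, hDcard i hi]
          have hexp : (i+1) * n k = i * n k + n k := by ring
          omega
        have hEmem : ∀ a, a ∈ E ↔ a ∈ A ∧ qf (i+1) ≤ a ∧ a < qf i := by
          intro a
          constructor
          · intro ha
            obtain ⟨h1, h2⟩ := mem_sdiff.mp ha
            obtain ⟨hA1, hq1⟩ := mem_filter.mp h1
            refine ⟨hA1, hq1, ?_⟩
            by_contra h
            push_neg at h
            exact h2 (mem_filter.mpr ⟨hA1, h⟩)
          · rintro ⟨h1, h2, h3⟩
            exact mem_sdiff.mpr ⟨mem_filter.mpr ⟨h1, h2⟩,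
              fun hd => absurd (mem_filter.mp hd).2 (by omega)⟩
        set v := (∑ j ∈ range (qf i), f j x • e j) - (∑ j ∈ range (qf (i+1)), f j x • e j)
          with hv
        have hvnorm : ‖v‖ ≤ 2 * K * ‖x‖ := by
          calc ‖v‖ ≤ ‖∑ j ∈ range (qf i), f j x • e j‖ +
              ‖∑ j ∈ range (qf (i+1)), f j x • e j‖ := norm_sub_le _ _
          _ ≤ K * ‖x‖ + K * ‖x‖ := add_le_add (hSchauder x (qf i)) (hSchauder x (qf (i+1)))
          _ = 2 * K * ‖x‖ := by ring
        have hvco : ∀ j, f j v = if qf (i+1) ≤ j ∧ j < qf i then f j x else 0 := by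
          intro j
          rw [hv, map_sub, coeff_sum e f hbio (fun a => f a x) (range (qf i)) j,
            coeff_sum e f hbio (fun a => f a x) (range (qf (i+1))) j]
          simp only [mem_range]
          by_cases h1 : j < qf (i+1)
          · rw [if_pos (lt_trans h1 hlt), if_pos h1, if_neg (by omega), sub_self]
          · by_cases h2 : j < qf i
            · rw [if_pos h2, if_neg h1, if_pos ⟨by omega, h2⟩, sub_zero]
            · rw [if_neg h2, if_neg h1, if_neg (by omega), sub_self]
        have hgreedyE : IsGreedySet f t v E := by
          intro a ha j hj
          rw [hvco a, hvco j,
            if_pos (⟨((hEmem a).mp ha).2.1, ((hEmem a).mp ha).2.2⟩ :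
              qf (i+1) ≤ a ∧ a < qf i)]
          by_cases hjw : qf (i+1) ≤ j ∧ j < qf i
          · rw [if_pos hjw]
            have hjA : j ∉ A := fun hjA => hj ((hEmem j).mpr ⟨hjA, hjw.1, hjw.2⟩)
            have h1 := hA a ((hEmem a).mp ha).1 j hjA
            rw [one_mul] at h1
            calc t * |f j x| ≤ 1 * |f j x| :=
              mul_le_mul_of_nonneg_right ht1 (abs_nonneg _)
            _ = |f j x| := one_mul _
            _ ≤ |f a x| := h1
          · rw [if_neg hjw]
            simp only [abs_zero, mul_zero]
            exact abs_nonneg _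
        have hqgE := hqg v E hgreedyE ⟨k, hEcard⟩
        have hprojE : proj e f E v = proj e f E x := by
          unfold proj
          refine Finset.sum_congr rfl ?_
          intro a ha
          rw [hvco a, if_pos ⟨((hEmem a).mp ha).2.1, ((hEmem a).mp ha).2.2⟩]
        have hsplit : proj e f (D (i+1)) x = proj e f E x + proj e f (D i) x := by
          unfold proj
          rw [hE]
          exact (Finset.sum_sdiff hsub).symm
        have hfinal : ‖proj e f (D (i+1)) x‖ ≤ ((i : ℝ) + 1) * (2 * C * K * ‖x‖) := by
          calc ‖proj e f (D (i+1)) x‖ = ‖proj e f E x + proj e f (D i) x‖ := by rw [hsplit]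
          _ ≤ ‖proj e f E x‖ + ‖proj e f (D i) x‖ := norm_add_le _ _
          _ ≤ C * ‖v‖ + (i : ℝ) * (2 * C * K * ‖x‖) := by
              refine add_le_add ?_ (ih hi)
              rw [← hprojE]
              exact hqgE
          _ ≤ C * (2 * K * ‖x‖) + (i : ℝ) * (2 * C * K * ‖x‖) :=
              add_le_add_left (mul_le_mul_of_nonneg_left hvnorm hC0) _
          _ = ((i : ℝ) + 1) * (2 * C * K * ‖x‖) := by ring
        calc ‖proj e f (D (i+1)) x‖ ≤ ((i : ℝ) + 1) * (2 * C * K * ‖x‖) := hfinal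
        _ = ((i+1 : ℕ) : ℝ) * (2 * C * K * ‖x‖) := by push_cast; ring
    -- remainder
    set qc := qf c with hqc
    have hDc : (D c).card = c * n k := hDcard c le_rfl
    have hDcsub : D c ⊆ A := filter_subset _ _
    have hDcIco : D c ⊆ Finset.Ico qc N := by
      intro a ha
      exact mem_Ico.mpr ⟨(mem_filter.mp ha).2, hNA a (mem_filter.mp ha).1⟩
    have hnkc : n k ≤ c * n k := by
      calc n k = 1 * n k := (one_mul _).symm
      _ ≤ c * n k := Nat.mul_le_mul_right _ hc1
    set R := A \ D c with hR
    have hRcard : R.card = r := by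
      rw [hR, card_sdiff_of_subset hDcsub, hDc]
      omega
    have hRmem : ∀ a, a ∈ R ↔ a ∈ A ∧ a < qc := by
      intro a
      rw [hR, mem_sdiff]
      constructor
      · rintro ⟨ha, hnd⟩
        refine ⟨ha, ?_⟩
        by_contra h
        push_neg at h
        exact hnd (mem_filter.mpr ⟨ha, h⟩)
      · rintro ⟨ha, hlt⟩
        exact ⟨ha, fun hd => absurd (mem_filter.mp hd).2 (by omega)⟩
    have hsplitA : proj e f A x = proj e f R x + proj e f (D c) x := by
      unfold proj
      rw [hR]
      exact (Finset.sum_sdiff hDcsub).symm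
    have hRbound : ‖proj e f R x‖ ≤ C * K * K * ‖x‖ := by
      by_cases hr0 : r = 0
      · have hRempty : R = ∅ := card_eq_zero.mp (by rw [hRcard]; exact hr0)
        rw [hRempty]
        have : proj e f (∅ : Finset ℕ) x = 0 := by simp [proj]
        rw [this, norm_zero]
        positivity
      · -- nonempty remainder
        have hIcoCard : n k - r ≤ (Finset.Ico qc N).card := by
          have h1 := card_le_card hDcIco
          rw [hDc] at h1
          omega
        obtain ⟨Γ', hΓ'sub, hΓ'card, hΓ'top⟩ :=
          exists_top_subset (fun j => |f j x|) (n k - r) (Finset.Ico qc N) hIcoCard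
        have hΓ'ne : Γ'.Nonempty := card_pos.mp (by rw [hΓ'card]; omega)
        set Pout := (range qc).filter (fun j => j ∉ A) with hPoutdef
        set vstar := if h : Pout.Nonempty then Pout.sup' h (fun j => |f j x|) else 0
          with hvstardef
        have hv0 : 0 ≤ vstar := by
          rw [hvstardef]
          split_ifs with h
          · obtain ⟨j, hj⟩ := h
            exact le_trans (abs_nonneg (f j x)) (Finset.le_sup' (fun j => |f j x|) hj)
          · exact le_refl 0
        have hvP2 : ∀ j, j < qc → j ∉ A → |f j x| ≤ vstar := by
          intro j h1 h2
          have hjP : j ∈ Pout := mem_filter.mpr ⟨mem_range.mpr h1, h2⟩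
          rw [hvstardef, dif_pos ⟨j, hjP⟩]
          exact Finset.le_sup' (fun j => |f j x|) hjP
        have hvP3 : ∀ i ∈ A, vstar ≤ |f i x| := by
          intro i hi
          rw [hvstardef]
          split_ifs with h
          · refine Finset.sup'_le _ _ ?_
            intro j hj
            have h2 := hA i hi j (mem_filter.mp hj).2
            rwa [one_mul] at h2
          · exact abs_nonneg _
        have hex_j0 : ∃ j₀, j₀ ∈ D c ∧ j₀ ∉ Γ' := by
          by_contra h
          push_neg at h
          have hsub2 : D c ⊆ Γ' := h
          have h2 := card_le_card hsub2
          rw [hDc, hΓ'card] at h2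
          omega
        obtain ⟨j₀, hj₀D, hj₀Γ⟩ := hex_j0
        have hvP4 : ∀ i ∈ Γ', vstar ≤ |f i x| := by
          intro i hi
          exact le_trans (hvP3 j₀ (hDcsub hj₀D)) (hΓ'top i hi j₀ (hDcIco hj₀D) hj₀Γ)
        set wstar := Γ'.inf' hΓ'ne (fun i => |f i x|) with hwstardef
        have hvw : vstar ≤ wstar := Finset.le_inf' _ _ hvP4
        have hwpos_of : vstar ≠ 0 → 0 < wstar := by
          intro h
          exact lt_of_lt_of_le (lt_of_le_of_ne hv0 (Ne.symm h)) hvw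
        set δ := if vstar = 0 then (0:ℝ) else vstar / wstar with hδdef
        have hδ0 : 0 ≤ δ := by
          rw [hδdef]
          split_ifs with h
          · exact le_refl 0
          · exact div_nonneg hv0 (le_of_lt (hwpos_of h))
        have hδ1 : δ ≤ 1 := by
          rw [hδdef]
          split_ifs with h
          · norm_num
          · rw [div_le_one (hwpos_of h)]
            exact hvw
        have hδw : δ * wstar ≤ vstar := by
          rw [hδdef]
          split_ifs with h
          · rw [zero_mul]
            exact hv0
          · rw [div_mul_cancel₀ _ (ne_of_gt (hwpos_of h))]
        have hδi : ∀ i ∈ Γ', vstar ≤ δ * |f i x| := by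
          intro i hi
          rw [hδdef]
          split_ifs with h
          · rw [h, zero_mul]
          · have hw := hwpos_of h
            have h1 : wstar ≤ |f i x| := Finset.inf'_le _ hi
            calc vstar = vstar / wstar * wstar := (div_mul_cancel₀ _ (ne_of_gt hw)).symm
            _ ≤ vstar / wstar * |f i x| :=
                mul_le_mul_of_nonneg_left h1 (div_nonneg hv0 (le_of_lt hw))
        set z := (1 - δ) • (∑ j ∈ range qc, f j x • e j) +
            δ • (∑ j ∈ range N, f j x • e j) with hzdef
        have hznorm : ‖z‖ ≤ K * ‖x‖ := by
          calc ‖z‖ ≤ ‖(1 - δ) • (∑ j ∈ range qc, f j x • e j)‖ +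
              ‖δ • (∑ j ∈ range N, f j x • e j)‖ := norm_add_le _ _
          _ = (1 - δ) * ‖∑ j ∈ range qc, f j x • e j‖ +
              δ * ‖∑ j ∈ range N, f j x • e j‖ := by
              rw [norm_smul, norm_smul, Real.norm_eq_abs, Real.norm_eq_abs,
                abs_of_nonneg (by linarith : (0:ℝ) ≤ 1 - δ), abs_of_nonneg hδ0]
          _ ≤ (1 - δ) * (K * ‖x‖) + δ * (K * ‖x‖) := by
              refine add_le_add ?_ ?_
              · exact mul_le_mul_of_nonneg_left (hSchauder x qc) (by linarith)
              · exact mul_le_mul_of_nonneg_left (hSchauder x N) hδ0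
          _ = K * ‖x‖ := by ring
        have hqcN : qc < N := by
          have hne : (D c).Nonempty := card_pos.mp (by rw [hDc]; omega)
          obtain ⟨a, ha⟩ := hne
          have h2 := hDcIco ha
          rw [mem_Ico] at h2
          omega
        have hzco : ∀ j, f j z =
            if j < qc then f j x else (if j < N then δ * f j x else 0) := by
          intro j
          rw [hzdef, map_add, map_smul, map_smul,
            coeff_sum e f hbio (fun a => f a x) (range qc) j,
            coeff_sum e f hbio (fun a => f a x) (range N) j]
          simp only [mem_range, smul_eq_mul]
          by_cases h1 : j < qc
          · rw [if_pos h1, if_pos (lt_trans h1 hqcN), if_pos h1]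
            ring
          · rw [if_neg h1, if_neg h1]
            by_cases h2 : j < N
            · rw [if_pos h2, if_pos h2]
              ring
            · rw [if_neg h2, if_neg h2]
              ring
        set Γ := R ∪ Γ' with hΓdef
        have hdisj : Disjoint R Γ' := by
          rw [Finset.disjoint_left]
          intro a haR haΓ
          have h1 := ((hRmem a).mp haR).2
          have h2 := hΓ'sub haΓ
          rw [mem_Ico] at h2
          omega
        have hΓcard : Γ.card = n k := by
          rw [hΓdef, card_union_of_disjoint hdisj, hRcard, hΓ'card]
          omega
        have hgreedyΓ : IsGreedySet f t z Γ := by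
          intro a ha j hj
          have hjz : |f j z| ≤ vstar := by
            rw [hzco j]
            by_cases h1 : j < qc
            · rw [if_pos h1]
              have hjA : j ∉ A := by
                intro hjA
                exact hj (mem_union_left _ ((hRmem j).mpr ⟨hjA, h1⟩))
              exact hvP2 j h1 hjA
            · rw [if_neg h1]
              by_cases h2 : j < N
              · rw [if_pos h2]
                have hjI : j ∈ Finset.Ico qc N := mem_Ico.mpr ⟨by omega, h2⟩
                have hjΓ' : j ∉ Γ' := fun h => hj (mem_union_right _ h)
                have h3 : |f j x| ≤ wstar :=
                  Finset.le_inf' _ _ (fun i hi => hΓ'top i hi j hjI hjΓ')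
                rw [abs_mul, abs_of_nonneg hδ0]
                calc δ * |f j x| ≤ δ * wstar := mul_le_mul_of_nonneg_left h3 hδ0
                _ ≤ vstar := hδw
              · rw [if_neg h2, abs_zero]
                exact hv0
          have haz : vstar ≤ |f a z| := by
            rw [hzco a]
            rcases mem_union.mp ha with haR | haΓ'
            · have h1 := (hRmem a).mp haR
              rw [if_pos h1.2]
              exact hvP3 a h1.1
            · have h2 := hΓ'sub haΓ'
              rw [mem_Ico] at h2
              rw [if_neg (by omega), if_pos h2.2, abs_mul, abs_of_nonneg hδ0]
              exact hδi a haΓ'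
          calc t * |f j z| ≤ 1 * |f j z| := mul_le_mul_of_nonneg_right ht1 (abs_nonneg _)
          _ = |f j z| := one_mul _
          _ ≤ vstar := hjz
          _ ≤ |f a z| := haz
        have hqgΓ := hqg z Γ hgreedyΓ ⟨k, hΓcard⟩
        set w := proj e f Γ z with hwdef
        have hfw : ∀ i', f i' w = if i' ∈ Γ then f i' z else 0 := by
          intro i'
          rw [hwdef]
          exact coeff_sum e f hbio (fun j => f j z) Γ i'
        have hprojR : (∑ j ∈ range qc, f j w • e j) = proj e f R x := by
          have h1 : ∀ j ∈ range qc, f j w • e j =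
              (if j ∈ Γ then f j x • e j else 0) := by
            intro j hj
            rw [hfw j]
            by_cases h : j ∈ Γ
            · rw [if_pos h, if_pos h, hzco j, if_pos (mem_range.mp hj)]
            · rw [if_neg h, if_neg h, zero_smul]
          rw [Finset.sum_congr rfl h1, Finset.sum_ite_mem]
          have h2 : range qc ∩ Γ = R := by
            ext a
            rw [mem_inter, mem_range]
            constructor
            · rintro ⟨ha1, ha2⟩
              rcases mem_union.mp ha2 with h | h
              · exact h
              · have h3 := hΓ'sub h
                rw [mem_Ico] at h3
                omega
            · intro haR
              exact ⟨((hRmem a).mp haR).2, mem_union_left _ haR⟩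
          rw [h2]
          rfl
        calc ‖proj e f R x‖ = ‖∑ j ∈ range qc, f j w • e j‖ := by rw [hprojR]
        _ ≤ K * ‖w‖ := hSchauder w qc
        _ ≤ K * (C * ‖z‖) := mul_le_mul_of_nonneg_left hqgΓ hK0
        _ ≤ K * (C * (K * ‖x‖)) :=
            mul_le_mul_of_nonneg_left (mul_le_mul_of_nonneg_left hznorm hC0) hK0
        _ = C * K * K * ‖x‖ := by ring
    -- final assembly
    have hclR : (c : ℝ) ≤ (l : ℝ) - 1 := by
      have h1 : (c : ℝ) + 1 ≤ (l : ℝ) := by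
        exact_mod_cast Nat.succ_le_of_lt hcl
      linarith
    have hDbc := hDbound c le_rfl
    calc ‖proj e f A x‖ = ‖proj e f R x + proj e f (D c) x‖ := by rw [hsplitA]
    _ ≤ ‖proj e f R x‖ + ‖proj e f (D c) x‖ := norm_add_le _ _
    _ ≤ C * K * K * ‖x‖ + (c : ℝ) * (2 * C * K * ‖x‖) := add_le_add hRbound hDbc
    _ ≤ 2 * C * K * ((l : ℝ) - 1 + K) * ‖x‖ := by
        nlinarith [mul_nonneg (mul_nonneg (mul_nonneg hC0 hK0) hK0) (norm_nonneg x),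
          mul_nonneg (sub_nonneg.mpr hclR)
            (mul_nonneg (mul_nonneg (mul_nonneg (by norm_num : (0:ℝ) ≤ 2) hC0) hK0)
              (norm_nonneg x))]
    _ ≤ max ((n 0 : ℝ) * (⨆ i, ‖e i‖) * (⨆ i, ‖f i‖))
          (2 * C * K * ((l : ℝ) - 1 + K)) * ‖x‖ :=
        mul_le_mul_of_nonneg_right (le_max_right _ _) (norm_nonneg x)
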